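/- The monomials $z^p w^q$ with $p\in\mathbb{N}^n$, $q\in\mathbb{Z}$, and $|p|+k(q+1)>-n$ belong to $L^2(\Omega^{n+1}_k)$, i.e., $\int_{\Omega^{n+1}_k}|z^p|^2|w^q|^2\,dV<\infty$ precisely for this range of indices. -/

import Mathlib

open MeasureTheory

noncomputable instance (n : ℕ) : MeasurableSpace (EuclideanSpace ℂ (Fin n)) :=
  MeasurableSpace.comap WithLp.ofLp MeasurableSpace.pi

instance (n : ℕ) : BorelSpace (EuclideanSpace ℂ (Fin n)) := PiLp.borelSpace 2

noncomputable instance (n : ℕ) : MeasureSpace (EuclideanSpace ℂ (Fin n)) :=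
  ⟨Measure.map (WithLp.toLp 2) (Measure.pi fun _ : Fin n => (volume : Measure ℂ))⟩

/-- The generalized Hartogs triangle
`Ω^{n+1}_k = {(z,w) ∈ ℂⁿ × ℂ : |z|^k < |w| < 1}`. -/
def Omega (k n : ℕ) : Set (EuclideanSpace ℂ (Fin n) × ℂ) :=
  {x | ‖x.1‖ ^ k < ‖x.2‖ ∧ ‖x.2‖ < 1}

open Real Set
open scoped ENNReal

namespace HartogsProofAux


theorem lintegral_comp_polarCoord_symm (f : ℝ × ℝ → ℝ≥0∞) :
    (∫⁻ p in polarCoord.target, ENNReal.ofReal p.1 * f (polarCoord.symm p)) = ∫⁻ p, f p := by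
  set B : ℝ × ℝ → ℝ × ℝ →L[ℝ] ℝ × ℝ := fun p =>
    LinearMap.toContinuousLinearMap (Matrix.toLin (Module.Basis.finTwoProd ℝ) (Module.Basis.finTwoProd ℝ)
      !![Real.cos p.2, -p.1 * Real.sin p.2; Real.sin p.2, p.1 * Real.cos p.2])
  have A : ∀ p ∈ polarCoord.target, HasFDerivWithinAt polarCoord.symm (B p) polarCoord.target p :=
    fun p _ => (hasFDerivAt_polarCoord_symm p).hasFDerivWithinAt
  have B_det : ∀ p, (B p).det = p.1 := by
    intro p
    conv_rhs => rw [← one_mul p.1, ← cos_sq_add_sin_sq p.2]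
    simp only [B, neg_mul, LinearMap.det_toContinuousLinearMap, LinearMap.det_toLin,
      Matrix.det_fin_two_of, sub_neg_eq_add]
    ring
  symm
  calc
    ∫⁻ p, f p = ∫⁻ p in polarCoord.source, f p := by
      rw [← setLIntegral_univ]
      exact setLIntegral_congr polarCoord_source_ae_eq_univ.symm
    _ = ∫⁻ p in polarCoord.symm '' polarCoord.target, f p := by
      rw [polarCoord.symm_image_target_eq_source]
    _ = ∫⁻ p in polarCoord.target, ENNReal.ofReal |(B p).det| * f (polarCoord.symm p) := by
      exact lintegral_image_eq_lintegral_abs_det_fderiv_mul volume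
        polarCoord.open_target.measurableSet A polarCoord.symm.injOn f
    _ = ∫⁻ p in polarCoord.target, ENNReal.ofReal p.1 * f (polarCoord.symm p) := by
      refine setLIntegral_congr_fun polarCoord.open_target.measurableSet
        (fun p hp => ?_)
      rw [B_det, abs_of_pos hp.1]

theorem lintegral_comp_complex_polarCoord_symm (f : ℂ → ℝ≥0∞) :
    (∫⁻ p in polarCoord.target, ENNReal.ofReal p.1 * f (Complex.polarCoord.symm p)) =
      ∫⁻ z, f z := by
  rw [← (Complex.volume_preserving_equiv_real_prod.symm).lintegral_comp_emb
    Complex.measurableEquivRealProd.symm.measurableEmbedding, ← lintegral_comp_polarCoord_symm]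
  rfl

theorem lintegral_Ioo_rpow_lt_top_iff {s : ℝ} :
    (∫⁻ r in Ioo (0:ℝ) 1, ENNReal.ofReal (r ^ s)) < ⊤ ↔ -1 < s := by
  rw [← intervalIntegral.integrableOn_Ioo_rpow_iff one_pos]
  have hm : AEStronglyMeasurable (fun r : ℝ => r ^ s) (volume.restrict (Ioo (0:ℝ) 1)) :=
    (by fun_prop : Measurable fun r : ℝ => r ^ s).aestronglyMeasurable
  have hae : 0 ≤ᵐ[volume.restrict (Ioo (0:ℝ) 1)] fun r : ℝ => r ^ s :=
    (ae_restrict_mem measurableSet_Ioo).mono fun r hr => Real.rpow_nonneg hr.1.le s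
  rw [IntegrableOn, ← hasFiniteIntegral_iff_ofReal hae]
  exact ⟨fun h => ⟨hm, h⟩, fun h => h.2⟩



theorem lintegral_ball_rpow_lt_top_iff (s : ℝ) :
    (∫⁻ w in Metric.ball (0:ℂ) 1, ENNReal.ofReal (‖w‖ ^ s)) < ⊤ ↔ -2 < s := by
  have h1 : (∫⁻ w in Metric.ball (0:ℂ) 1, ENNReal.ofReal (‖w‖ ^ s)) =
      ∫⁻ w, (Metric.ball (0:ℂ) 1).indicator (fun w => ENNReal.ofReal (‖w‖ ^ s)) w :=
    (lintegral_indicator measurableSet_ball _).symm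
  rw [h1, ← lintegral_comp_complex_polarCoord_symm]
  have h2 : ∫⁻ p in polarCoord.target,
      ENNReal.ofReal p.1 *
        (Metric.ball (0:ℂ) 1).indicator (fun w => ENNReal.ofReal (‖w‖ ^ s))
          (Complex.polarCoord.symm p) =
      ∫⁻ p in polarCoord.target,
        (Ioo (0:ℝ) 1 ×ˢ (univ : Set ℝ)).indicator
          (fun p : ℝ × ℝ => ENNReal.ofReal (p.1 ^ (s+1))) p := by
    refine setLIntegral_congr_fun polarCoord.open_target.measurableSet
      (fun p hp => ?_)
    have hp1 : 0 < p.1 := hp.1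
    have habs : ‖Complex.polarCoord.symm p‖ = p.1 := by
      rw [Complex.norm_polarCoord_symm, abs_of_pos hp1]
    by_cases hlt : p.1 < 1
    · rw [Set.indicator_of_mem (by rw [mem_ball_zero_iff, habs]; exact hlt),
        Set.indicator_of_mem (show p ∈ Ioo (0:ℝ) 1 ×ˢ (univ : Set ℝ) from
          ⟨⟨hp1, hlt⟩, mem_univ _⟩), habs,
        ← ENNReal.ofReal_mul hp1.le]
      congr 1
      rw [Real.rpow_add hp1, Real.rpow_one]; ring
    · rw [Set.indicator_of_notMem (by rw [mem_ball_zero_iff, habs]; exact hlt),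
        Set.indicator_of_notMem (fun h => hlt h.1.2), mul_zero]
  rw [h2, lintegral_indicator (measurableSet_Ioo.prod MeasurableSet.univ),
    Measure.restrict_restrict (measurableSet_Ioo.prod MeasurableSet.univ)]
  have h3 : (Ioo (0:ℝ) 1 ×ˢ (univ : Set ℝ)) ∩ polarCoord.target
      = Ioo (0:ℝ) 1 ×ˢ Ioo (-π) π := by
    rw [polarCoord_target, Set.prod_inter_prod, Set.univ_inter]
    congr 1
    rw [Set.inter_eq_left]
    exact fun x hx => hx.1
  rw [h3, MeasureTheory.Measure.volume_eq_prod, ← Measure.prod_restrict,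
    lintegral_prod _ (by fun_prop : Measurable fun p : ℝ × ℝ =>
      ENNReal.ofReal (p.1 ^ (s+1))).aemeasurable]
  simp only [lintegral_const, Measure.restrict_apply MeasurableSet.univ, Set.univ_inter]
  rw [lintegral_mul_const _ (by fun_prop : Measurable fun x : ℝ => ENNReal.ofReal (x ^ (s+1)))]
  have hC : volume (Ioo (-π) π) = ENNReal.ofReal (2 * π) := by
    rw [Real.volume_Ioo]; congr 1; ring
  rw [hC]
  have hCne : ENNReal.ofReal (2 * π) ≠ 0 := by
    simp [ENNReal.ofReal_eq_zero, not_le]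
    positivity
  have hCtop : ENNReal.ofReal (2 * π) ≠ ⊤ := ENNReal.ofReal_ne_top
  constructor
  · intro h
    have : (∫⁻ r in Ioo (0:ℝ) 1, ENNReal.ofReal (r ^ (s+1))) < ⊤ := by
      by_contra hcon
      rw [not_lt, top_le_iff] at hcon
      rw [hcon, ENNReal.top_mul hCne] at h
      exact absurd rfl h.ne
    have := lintegral_Ioo_rpow_lt_top_iff.1 this
    linarith
  · intro h
    have : (∫⁻ r in Ioo (0:ℝ) 1, ENNReal.ofReal (r ^ (s+1))) < ⊤ :=
      lintegral_Ioo_rpow_lt_top_iff.2 (by linarith)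
    exact ENNReal.mul_lt_top this hCtop.lt_top



instance haarE (n : ℕ) : (volume : Measure (EuclideanSpace ℂ (Fin n))).IsAddHaarMeasure :=
  Measure.MapLinearEquiv.isAddHaarMeasure (Measure.pi fun _ : Fin n => (volume : Measure ℂ))
    (WithLp.linearEquiv 2 ℝ (Fin n → ℂ)).symm

variable {n : ℕ} (p : Fin n → ℕ)

theorem measurable_P : Measurable fun z : EuclideanSpace ℂ (Fin n) =>
    ∏ i, ‖z i‖ ^ (2 * p i) := by
  exact Finset.measurable_prod _ fun i _ => (((measurable_pi_apply i).comp (WithLp.measurable_ofLp 2 _)).norm.pow_const _)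

theorem finrank_E : Module.finrank ℝ (EuclideanSpace ℂ (Fin n)) = 2 * n := by
  have : Module.finrank ℝ (EuclideanSpace ℂ (Fin n)) = Module.finrank ℝ (Fin n → ℂ) :=
    (WithLp.linearEquiv 2 ℝ (Fin n → ℂ)).finrank_eq
  rw [this]
  simp [Module.finrank_pi_fintype, Complex.finrank_real_complex, mul_comm]

theorem scale {R : ℝ} (hR : 0 < R) :
    (∫⁻ z in Metric.ball (0 : EuclideanSpace ℂ (Fin n)) R,
        ENNReal.ofReal (∏ i, ‖z i‖ ^ (2 * p i))) =
      ENNReal.ofReal (R ^ (2 * (∑ i, p i) + 2 * n)) *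
        ∫⁻ z in Metric.ball (0 : EuclideanSpace ℂ (Fin n)) 1,
          ENNReal.ofReal (∏ i, ‖z i‖ ^ (2 * p i)) := by
  set E := EuclideanSpace ℂ (Fin n)
  set f : E → ℝ≥0∞ := fun z => ENNReal.ofReal (∏ i, ‖z i‖ ^ (2 * p i)) with hf_def
  have hf : Measurable f := ENNReal.measurable_ofReal.comp (measurable_P p)
  set g : E → ℝ≥0∞ := (Metric.ball (0 : E) R).indicator f with hg_def
  have hg : Measurable g := hf.indicator measurableSet_ball
  have hmap := Measure.map_addHaar_smul (volume : Measure E) (ne_of_gt hR)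
  have key : ∫⁻ z, g ((R : ℝ) • z) ∂(volume : Measure E) =
      ENNReal.ofReal ((|R| ^ Module.finrank ℝ E)⁻¹) * ∫⁻ z, g z ∂(volume : Measure E) := by
    rw [← lintegral_map hg (measurable_const_smul R), hmap]
    simp [lintegral_smul_measure, abs_inv, abs_pow]
  have hleft : ∀ z : E, g ((R : ℝ) • z) =
      (Metric.ball (0 : E) 1).indicator
        (fun z => ENNReal.ofReal (R ^ (2 * ∑ i, p i)) * f z) z := by
    intro z
    have hnorm : ‖(R : ℝ) • z‖ = R * ‖z‖ := by
      rw [norm_smul, Real.norm_eq_abs, abs_of_pos hR]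
    have hmem : (R : ℝ) • z ∈ Metric.ball (0 : E) R ↔ z ∈ Metric.ball (0 : E) 1 := by
      rw [mem_ball_zero_iff, mem_ball_zero_iff, hnorm]
      constructor
      · intro h; nlinarith [norm_nonneg z]
      · intro h; nlinarith [norm_nonneg z]
    have hval : f ((R : ℝ) • z) = ENNReal.ofReal (R ^ (2 * ∑ i, p i)) * f z := by
      rw [hf_def]
      have : ∀ i, ‖((R : ℝ) • z) i‖ = R * ‖z i‖ := by
        intro i
        have : ((R : ℝ) • z) i = (R : ℝ) • (z i) := rfl
        rw [this, norm_smul, Real.norm_eq_abs, abs_of_pos hR]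
      simp only [this]
      rw [← ENNReal.ofReal_mul (by positivity)]
      congr 1
      rw [Finset.prod_congr rfl (fun i _ => mul_pow R ‖z i‖ (2 * p i)),
        Finset.prod_mul_distrib, Finset.prod_pow_eq_pow_sum]
      congr 1
      rw [Finset.mul_sum]
    by_cases h : z ∈ Metric.ball (0 : E) 1
    · rw [hg_def, Set.indicator_of_mem (hmem.2 h), Set.indicator_of_mem h, hval]
    · rw [hg_def, Set.indicator_of_notMem (fun hc => h (hmem.1 hc)),
        Set.indicator_of_notMem h]
  have e1 : ∫⁻ z, g ((R : ℝ) • z) ∂(volume : Measure E) =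
      ENNReal.ofReal (R ^ (2 * ∑ i, p i)) * ∫⁻ z in Metric.ball (0 : E) 1, f z := by
    simp only [hleft]
    rw [lintegral_indicator measurableSet_ball, lintegral_const_mul _ hf]
  have e2 : ∫⁻ z, g z ∂(volume : Measure E) = ∫⁻ z in Metric.ball (0 : E) R, f z :=
    lintegral_indicator measurableSet_ball _
  have key2 : ENNReal.ofReal (R ^ (2 * ∑ i, p i)) *
        (∫⁻ z in Metric.ball (0 : E) 1, f z) =
      ENNReal.ofReal ((|R| ^ Module.finrank ℝ E)⁻¹) *
        ∫⁻ z in Metric.ball (0 : E) R, f z := by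
    rw [← e1, key, e2]
  have hRd : ENNReal.ofReal ((|R| ^ Module.finrank ℝ E)⁻¹) * ENNReal.ofReal (R ^ (2*n)) = 1 := by
    rw [← ENNReal.ofReal_mul (by positivity), abs_of_pos hR, finrank_E,
      inv_mul_cancel₀ (by positivity)]
    exact ENNReal.ofReal_one
  calc ∫⁻ z in Metric.ball (0 : E) R, f z
      = (ENNReal.ofReal ((|R| ^ Module.finrank ℝ E)⁻¹) * ENNReal.ofReal (R ^ (2*n))) *
        ∫⁻ z in Metric.ball (0 : E) R, f z := by rw [hRd, one_mul]
    _ = ENNReal.ofReal (R ^ (2*n)) *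
        (ENNReal.ofReal ((|R| ^ Module.finrank ℝ E)⁻¹) * ∫⁻ z in Metric.ball (0 : E) R, f z) := by
        ring
    _ = ENNReal.ofReal (R ^ (2*n)) * (ENNReal.ofReal (R ^ (2 * ∑ i, p i)) *
        ∫⁻ z in Metric.ball (0 : E) 1, f z) := by rw [← key2]
    _ = ENNReal.ofReal (R ^ (2 * (∑ i, p i) + 2 * n)) * ∫⁻ z in Metric.ball (0 : E) 1, f z := by
        rw [← mul_assoc, ← ENNReal.ofReal_mul (by positivity), ← pow_add]
        ring_nf

theorem J_lt_top :
    (∫⁻ z in Metric.ball (0 : EuclideanSpace ℂ (Fin n)) 1,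
        ENNReal.ofReal (∏ i, ‖z i‖ ^ (2 * p i))) < ⊤ := by
  set E := EuclideanSpace ℂ (Fin n)
  have hb : ∀ z ∈ Metric.ball (0 : E) 1,
      ENNReal.ofReal (∏ i, ‖z i‖ ^ (2 * p i)) ≤ 1 := by
    intro z hz
    rw [mem_ball_zero_iff] at hz
    have hcoord : ∀ i, ‖z i‖ ≤ 1 := by
      intro i
      calc ‖z i‖ ≤ ‖z‖ := by
            rw [EuclideanSpace.norm_eq]
            rw [show ‖z i‖ = Real.sqrt (‖z i‖ ^ 2) from (Real.sqrt_sq (norm_nonneg _)).symm]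
            apply Real.sqrt_le_sqrt
            exact Finset.single_le_sum (f := fun j => ‖z j‖ ^ 2)
              (fun j _ => by positivity) (Finset.mem_univ i)
        _ ≤ 1 := hz.le
    calc ENNReal.ofReal (∏ i, ‖z i‖ ^ (2 * p i)) ≤ ENNReal.ofReal 1 := by
          apply ENNReal.ofReal_le_ofReal
          apply Finset.prod_le_one
          · intro i _; positivity
          · intro i _; exact pow_le_one₀ (norm_nonneg _) (hcoord i)
      _ = 1 := ENNReal.ofReal_one
  calc (∫⁻ z in Metric.ball (0 : E) 1, ENNReal.ofReal (∏ i, ‖z i‖ ^ (2 * p i)))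
      ≤ ∫⁻ _ in Metric.ball (0 : E) 1, 1 := by
        refine lintegral_mono_ae ?_
        exact (ae_restrict_mem measurableSet_ball).mono hb
    _ = volume (Metric.ball (0 : E) 1) := by simp
    _ < ⊤ := measure_ball_lt_top

theorem J_pos :
    0 < ∫⁻ z in Metric.ball (0 : EuclideanSpace ℂ (Fin n)) 1,
        ENNReal.ofReal (∏ i, ‖z i‖ ^ (2 * p i)) := by
  set E := EuclideanSpace ℂ (Fin n)
  set f : E → ℝ≥0∞ := fun z => ENNReal.ofReal (∏ i, ‖z i‖ ^ (2 * p i)) with hf_def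
  have hf : Measurable f := ENNReal.measurable_ofReal.comp (measurable_P p)
  rw [lintegral_pos_iff_support hf]
  set N : Set E := ⋃ i, {z : E | z i = 0} with hN_def
  have hNnull : volume N = 0 := by
    refine measure_iUnion_null fun i => ?_
    have := (MeasurableEquiv.toLp 2 (Fin n → ℂ)).map_apply
      (μ := Measure.pi fun _ : Fin n => (volume : Measure ℂ)) {z : E | z i = 0}
    rw [MeasurableEquiv.coe_toLp] at this
    rw [show (volume : Measure E) = Measure.map (WithLp.toLp 2)
      (Measure.pi fun _ : Fin n => (volume : Measure ℂ)) from rfl, this]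
    exact Measure.pi_hyperplane (fun _ : Fin n => (volume : Measure ℂ)) i 0
  have hsub : Metric.ball (0 : E) 1 \ N ⊆ Function.support f := by
    intro z hz
    have hzi : ∀ i, z i ≠ 0 := by
      intro i hzi
      exact hz.2 (Set.mem_iUnion.2 ⟨i, hzi⟩)
    have : 0 < ∏ i, ‖z i‖ ^ (2 * p i) := by
      apply Finset.prod_pos
      intro i _
      have := norm_pos_iff.2 (hzi i)
      positivity
    simp only [Function.mem_support, hf_def, ne_eq, ENNReal.ofReal_eq_zero, not_le]
    exact this
  have : volume (Metric.ball (0 : E) 1 \ N) = volume (Metric.ball (0 : E) 1) :=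
    measure_diff_null hNnull
  calc (0 : ℝ≥0∞) < volume (Metric.ball (0 : E) 1) :=
        Metric.measure_ball_pos _ _ one_pos
    _ = volume (Metric.ball (0 : E) 1 \ N) := this.symm
    _ ≤ (volume.restrict (Metric.ball (0 : E) 1)) (Function.support f) := by
        rw [Measure.restrict_apply' measurableSet_ball]
        exact measure_mono (fun z hz => ⟨hsub hz, hz.1⟩)



instance (n : ℕ) : SigmaFinite (volume : Measure (EuclideanSpace ℂ (Fin n))) :=
  inferInstance

theorem measurable_zpow_norm (m : ℤ) : Measurable fun w : ℂ => ‖w‖ ^ m := by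
  have hn : Measurable fun w : ℂ => ‖w‖ := measurable_norm
  rcases m with m | m
  · simpa using hn.pow_const m
  · simpa [zpow_negSucc] using hn.pow_const (m+1)

theorem arith (k n : ℕ) (hk : 0 < k) (hn : 0 < n) (q : ℤ) (S : ℕ) :
    (-2 < ((2*S + 2*n : ℕ):ℝ)/k + 2*(q:ℝ)) ↔ ((S:ℤ) + k*(q+1) > -(n:ℤ)) := by
  rw [div_add' _ _ _ (by positivity : (k:ℝ) ≠ 0), lt_div_iff₀ (by exact_mod_cast hk : (0:ℝ) < k)]
  have ht : (k:ℤ) * (q+1) = k*q + k := by ring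
  constructor
  · intro h
    have h' : (-2*(k:ℤ)) < (2*S + 2*n : ℤ) + 2*q*k := by exact_mod_cast h
    have h'' : (-2*(k:ℤ)) < 2*S + 2*n + 2*(k*q) := by
      rw [show (2*((k:ℤ)*q)) = 2*q*k by ring]; push_cast; push_cast at h'; linarith
    rw [gt_iff_lt, ht]
    linarith
  · intro h
    rw [gt_iff_lt, ht] at h
    have h' : (-2*(k:ℤ)) < (2*S + 2*n : ℤ) + 2*q*k := by
      rw [show (2*q*(k:ℤ)) = 2*(k*q) by ring]; linarith
    exact_mod_cast h'

end HartogsProofAux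

open HartogsProofAux Real Set
open scoped ENNReal

/-- The monomial `z^p w^q` is square-integrable on `Ω^{n+1}_k` exactly when
`|p| + k (q+1) > -n`. -/
theorem monomial_mem_L2_iff (k n : ℕ) (hk : 0 < k) (hn : 0 < n)
    (p : Fin n → ℕ) (q : ℤ) :
    (∫⁻ x in Omega k n,
        ENNReal.ofReal ((∏ i, ‖x.1 i‖ ^ (2 * p i)) * ‖x.2‖ ^ (2 * q : ℤ))) < ⊤ ↔
      (∑ i, (p i : ℤ)) + k * (q + 1) > -(n : ℤ) := by
  set E := EuclideanSpace ℂ (Fin n)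
  set f : E → ℝ≥0∞ := fun z => ENNReal.ofReal (∏ i, ‖z i‖ ^ (2 * p i)) with hf_def
  have hf : Measurable f := ENNReal.measurable_ofReal.comp (measurable_P p)
  set F : E × ℂ → ℝ≥0∞ := fun x =>
    ENNReal.ofReal ((∏ i, ‖x.1 i‖ ^ (2 * p i)) * ‖x.2‖ ^ (2 * q : ℤ)) with hF_def
  have hP0 : ∀ z : E, 0 ≤ ∏ i, ‖z i‖ ^ (2 * p i) := fun z =>
    Finset.prod_nonneg fun i _ => by positivity
  have hF : Measurable F := by
    apply ENNReal.measurable_ofReal.comp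
    exact ((measurable_P p).comp measurable_fst).mul
      ((measurable_zpow_norm (2*q)).comp measurable_snd)
  have hΩ : MeasurableSet (Omega k n) := by
    have : IsOpen (Omega k n) := by
      have h1 : IsOpen {x : E × ℂ | ‖x.1‖ ^ k < ‖x.2‖} :=
        isOpen_lt ((continuous_fst.norm).pow k) continuous_snd.norm
      have h2 : IsOpen {x : E × ℂ | ‖x.2‖ < 1} :=
        isOpen_lt continuous_snd.norm continuous_const
      have : Omega k n = {x : E × ℂ | ‖x.1‖ ^ k < ‖x.2‖} ∩ {x : E × ℂ | ‖x.2‖ < 1} := by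
        ext x; simp [Omega, Set.mem_setOf_eq, Set.mem_inter_iff]; exact Iff.rfl
      rw [this]; exact h1.inter h2
    exact this.measurableSet
  set J : ℝ≥0∞ := ∫⁻ z in Metric.ball (0 : E) 1, f z with hJ_def
  set A : ℕ := 2 * (∑ i, p i) + 2 * n with hA_def
  set s : ℝ := (A:ℝ)/k + 2*(q:ℝ) with hs_def
  have main : (∫⁻ x in Omega k n, F x) =
      J * ∫⁻ w in Metric.ball (0:ℂ) 1, ENNReal.ofReal (‖w‖ ^ s) := by
    rw [← lintegral_indicator hΩ, Measure.volume_eq_prod,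
      lintegral_prod_symm _ (hF.indicator hΩ).aemeasurable]
    have step : ∀ᵐ w : ℂ, (∫⁻ z, (Omega k n).indicator F (z, w) ∂(volume : Measure E)) =
        (Metric.ball (0:ℂ) 1).indicator
          (fun w => J * ENNReal.ofReal (‖w‖ ^ s)) w := by
      have hne : ∀ᵐ w : ℂ, w ≠ 0 := by
        rw [ae_iff]
        simpa using measure_singleton (0:ℂ)
      filter_upwards [hne] with w hw
      have hw0 : 0 < ‖w‖ := norm_pos_iff.2 hw
      by_cases hlt : ‖w‖ < 1
      · set R : ℝ := ‖w‖ ^ ((k:ℝ)⁻¹) with hR_def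
        have hR : 0 < R := Real.rpow_pos_of_pos hw0 _
        have hRk : R ^ k = ‖w‖ := Real.rpow_inv_natCast_pow (norm_nonneg w) hk.ne'
        have hptwise : ∀ z : E, (Omega k n).indicator F (z, w) =
            (Metric.ball (0:E) R).indicator f z * ENNReal.ofReal (‖w‖ ^ (2*q : ℤ)) := by
          intro z
          have hball : z ∈ Metric.ball (0:E) R ↔ ‖z‖ ^ k < ‖w‖ := by
            rw [mem_ball_zero_iff, ← hRk]
            exact (pow_lt_pow_iff_left₀ (norm_nonneg z) hR.le hk.ne').symm
          by_cases hz : ‖z‖ ^ k < ‖w‖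
          · rw [Set.indicator_of_mem (show (z, w) ∈ Omega k n from ⟨hz, hlt⟩),
              Set.indicator_of_mem (hball.2 hz), hF_def, hf_def]
            exact ENNReal.ofReal_mul (hP0 z)
          · rw [Set.indicator_of_notMem (show (z, w) ∉ Omega k n from fun hc => hz hc.1),
              Set.indicator_of_notMem (fun hc => hz (hball.1 hc)), zero_mul]
        simp only [hptwise]
        rw [lintegral_mul_const _ (hf.indicator measurableSet_ball),
          lintegral_indicator measurableSet_ball, scale p hR,
          Set.indicator_of_mem (mem_ball_zero_iff.2 hlt)]
        rw [← hJ_def, ← hA_def]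
        have hRA : R ^ A = ‖w‖ ^ ((A:ℝ)/k) := by
          rw [hR_def, ← Real.rpow_natCast (‖w‖ ^ ((k:ℝ)⁻¹)) A, ← Real.rpow_mul (norm_nonneg w)]
          congr 1
          field_simp
        have hzp : (‖w‖ : ℝ) ^ (2*q : ℤ) = ‖w‖ ^ ((2*(q:ℝ)) : ℝ) := by
          rw [show ((2*(q:ℝ)) : ℝ) = ((2*q : ℤ) : ℝ) by push_cast; ring,
            Real.rpow_intCast]
        rw [hRA, hzp, mul_comm (ENNReal.ofReal (‖w‖ ^ ((A:ℝ)/k))) J, mul_assoc,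
          ← ENNReal.ofReal_mul (Real.rpow_nonneg (norm_nonneg w) _),
          ← Real.rpow_add hw0, hs_def]
      · have hptwise : ∀ z : E, (Omega k n).indicator F (z, w) = 0 := by
          intro z
          exact Set.indicator_of_notMem (fun hc => hlt hc.2) F
        simp only [hptwise]
        rw [Set.indicator_of_notMem (fun hc => hlt (mem_ball_zero_iff.1 hc))]
        exact lintegral_zero
    rw [lintegral_congr_ae step, lintegral_indicator measurableSet_ball,
      lintegral_const_mul J (by fun_prop : Measurable fun w : ℂ => ENNReal.ofReal (‖w‖ ^ s))]
  rw [show (∫⁻ x in Omega k n,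
        ENNReal.ofReal ((∏ i, ‖x.1 i‖ ^ (2 * p i)) * ‖x.2‖ ^ (2 * q : ℤ)))
      = ∫⁻ x in Omega k n, F x from rfl, main]
  have hJpos : 0 < J := J_pos p
  have hJtop : J < ⊤ := J_lt_top p
  have hmul : J * (∫⁻ w in Metric.ball (0:ℂ) 1, ENNReal.ofReal (‖w‖ ^ s)) < ⊤ ↔
      (∫⁻ w in Metric.ball (0:ℂ) 1, ENNReal.ofReal (‖w‖ ^ s)) < ⊤ := by
    constructor
    · intro h
      by_contra hcon
      rw [not_lt, top_le_iff] at hcon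
      rw [hcon, ENNReal.mul_top hJpos.ne'] at h
      exact absurd rfl h.ne
    · intro h
      exact ENNReal.mul_lt_top hJtop h
  rw [hmul, lintegral_ball_rpow_lt_top_iff]
  rw [hs_def, hA_def, arith k n hk hn q (∑ i, p i), Nat.cast_sum]
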